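/- Let s ∈ (0,1), let N be a positive integer with N > 2s, and let u ∈ L^{2*_s}(ℝ^N) with 2*_s = 2N/(N−2s). Then for every x₀ ∈ ℝ^N, lim_{δ→0⁺} δ^N ∫_{ℝ^N∖B_δ(x₀)} |u(x)|²/|x−x₀|^{N+2s} dx = 0. -/

import Mathlib

open MeasureTheory Filter Topology Metric ENNReal NNReal
open Set

noncomputable section

abbrev EN (N : ℕ) := EuclideanSpace ℝ (Fin N)

/-- The fractional critical Sobolev exponent `2*_s = 2N/(N-2s)`. -/
def pstar (N : ℕ) (s : ℝ) : ℝ := 2 * N / ((N : ℝ) - 2 * s)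

/-- The squared Gagliardo seminorm `[u]_s²`, as an extended nonnegative real. -/
def gagSq (N : ℕ) (s : ℝ) (u : EN N → ℝ) : ℝ≥0∞ :=
  ∫⁻ p : EN N × EN N, ENNReal.ofReal ((u p.1 - u p.2) ^ 2 / ‖p.1 - p.2‖ ^ ((N : ℝ) + 2 * s))

/-- The Gagliardo seminorm `[u]_s`. -/
def gagSemi (N : ℕ) (s : ℝ) (u : EN N → ℝ) : ℝ := Real.sqrt (gagSq N s u).toReal

/-- Membership in `D^{s,2}(ℝ^N)`: `u ∈ L^{2*_s}` with finite Gagliardo seminorm. -/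
def memD (N : ℕ) (s : ℝ) (u : EN N → ℝ) : Prop :=
  MemLp u (ENNReal.ofReal (pstar N s)) volume ∧ gagSq N s u < ⊤

/-- The Gagliardo bilinear form. -/
def gagForm (N : ℕ) (s : ℝ) (u v : EN N → ℝ) : ℝ :=
  ∫ p : EN N × EN N, (u p.1 - u p.2) * (v p.1 - v p.2) / ‖p.1 - p.2‖ ^ ((N : ℝ) + 2 * s)

/-- Hypothesis (h0): `h ∈ L¹(ℝ^N) ∩ L^∞(ℝ^N)`. -/
def H0 (N : ℕ) (h : EN N → ℝ) : Prop :=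
  Integrable h volume ∧ MemLp h ⊤ volume

/-- Hypothesis (h1): there is an open ball on which `h` has a positive lower bound. -/
def H1 (N : ℕ) (h : EN N → ℝ) : Prop :=
  ∃ (x₀ : EN N) (ρ : ℝ), 0 < ρ ∧ ∃ c : ℝ, 0 < c ∧ ∀ x ∈ ball x₀ ρ, c ≤ h x

/-- Weak solution of `(-Δ)^s u = ε h u^q + u^{2*_s - 1}`: a nonnegative element of
`D^{s,2}` satisfying the weak formulation against every test function in `D^{s,2}`. -/
def IsWeakSolution (N : ℕ) (s q ε : ℝ) (h u : EN N → ℝ) : Prop :=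
  memD N s u ∧ ((0 : EN N → ℝ) ≤ᵐ[volume] u) ∧
  ∀ v : EN N → ℝ, memD N s v →
    gagForm N s u v =
      ε * ∫ x, h x * u x ^ q * v x + ∫ x, u x ^ (pstar N s - 1) * v x

/-- The functional `f_ε`. -/
def fval (N : ℕ) (s q ε : ℝ) (h : EN N → ℝ) (u : EN N → ℝ) : ℝ :=
  (1 / 2) * (gagSq N s u).toReal
    - (ε / (q + 1)) * ∫ x, h x * (max (u x) 0) ^ (q + 1)
    - (1 / pstar N s) * ∫ x, (max (u x) 0) ^ (pstar N s)

/-- The derivative pairing `⟨f'_ε(u), v⟩`. -/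
def fprime (N : ℕ) (s q ε : ℝ) (h u v : EN N → ℝ) : ℝ :=
  gagForm N s u v - ε * (∫ x, h x * (max (u x) 0) ^ q * v x)
    - ∫ x, (max (u x) 0) ^ (pstar N s - 1) * v x

/-- The fractional Sobolev constant `S`. -/
def Sconst (N : ℕ) (s : ℝ) : ℝ :=
  sInf ((fun u : EN N → ℝ =>
      (gagSq N s u).toReal / (eLpNorm u (ENNReal.ofReal (pstar N s)) volume).toReal ^ 2) ''
    {u : EN N → ℝ | memD N s u ∧ ¬ u =ᵐ[volume] (0 : EN N → ℝ)})

/-- The nonlinearity `g(x,t)` of the translated functional. -/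
def gfun (N : ℕ) (s q ε : ℝ) (h uε : EN N → ℝ) (x : EN N) (t : ℝ) : ℝ :=
  ε * h x * ((uε x + max t 0) ^ q - uε x ^ q)
    + ((uε x + max t 0) ^ (pstar N s - 1) - uε x ^ (pstar N s - 1))

/-- The translated functional `I_ε`, with `G(x,v) = ∫_0^v g(x,t) dt`. -/
def Ival (N : ℕ) (s q ε : ℝ) (h uε : EN N → ℝ) (v : EN N → ℝ) : ℝ :=
  (1 / 2) * (gagSq N s v).toReal - ∫ x, ∫ t in (0:ℝ)..(v x), gfun N s q ε h uε x t

/-- The derivative pairing `⟨I'_ε(v), w⟩`. -/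
def Iprime (N : ℕ) (s q ε : ℝ) (h uε : EN N → ℝ) (v w : EN N → ℝ) : ℝ :=
  gagForm N s v w - ∫ x, gfun N s q ε h uε x (v x) * w x

/-- `G*(x,t) = (1/2*_s)((u_ε + t_+)^{2*_s} - u_ε^{2*_s}) - u_ε^{2*_s-1} t_+`. -/
def Gstar (N : ℕ) (s : ℝ) (uε : EN N → ℝ) (x : EN N) (t : ℝ) : ℝ :=
  (1 / pstar N s) * ((uε x + max t 0) ^ (pstar N s) - uε x ^ (pstar N s))
    - uε x ^ (pstar N s - 1) * max t 0

/-- The auxiliary functional `I*_ε`. -/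
def Istar (N : ℕ) (s : ℝ) (uε : EN N → ℝ) (v : EN N → ℝ) : ℝ :=
  (1 / 2) * (gagSq N s v).toReal - ∫ x, Gstar N s uε x (v x)

/-- `|D^s ψ(x)|² = ∫ |ψ(x+h) - ψ(x)|²/|h|^{N+2s} dh`. -/
def DsqE (N : ℕ) (s : ℝ) (ψ : EN N → ℝ) (x : EN N) : ℝ≥0∞ :=
  ∫⁻ h : EN N, ENNReal.ofReal ((ψ (x + h) - ψ x) ^ 2 / ‖h‖ ^ ((N : ℝ) + 2 * s))

/-- The standard bubble `z(x) = κ (1+|x|²)^{-(N-2s)/2}`. -/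
def zbub (N : ℕ) (s κ : ℝ) (x : EN N) : ℝ := κ * (1 + ‖x‖ ^ 2) ^ (-((N : ℝ) - 2 * s) / 2)

/-- The rescaled bubble `z_{μ,ξ}(x) = μ^{-(N-2s)/2} z((x-ξ)/μ)`. -/
def zmu (N : ℕ) (s κ μ : ℝ) (ξ : EN N) (x : EN N) : ℝ :=
  μ ^ (-((N : ℝ) - 2 * s) / 2) * zbub N s κ (μ⁻¹ • (x - ξ))

lemma gmeas (N : ℕ) (β : ℝ) (x₀ : EN N) :
    Measurable (fun x : EN N => ((‖x - x₀‖₊ : ℝ≥0∞)) ^ (-β)) :=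
  ENNReal.continuous_rpow_const.measurable.comp (by fun_prop)

/-- Scaling identity for the lintegral of `‖x-x₀‖^(-β)` over the complement of a ball. -/
lemma scale_lemma (N : ℕ) (β : ℝ) (x₀ : EN N) {δ : ℝ} (hδ : 0 < δ) :
    ∫⁻ x in (ball x₀ δ)ᶜ, ((‖x - x₀‖₊ : ℝ≥0∞)) ^ (-β) =
      ENNReal.ofReal (δ ^ ((N : ℝ) - β)) *
        ∫⁻ x in (ball (0 : EN N) 1)ᶜ, ((‖x‖₊ : ℝ≥0∞)) ^ (-β) := by
  have hmeas : Measurable (fun x : EN N => ((‖x‖₊ : ℝ≥0∞)) ^ (-β)) := by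
    simpa using gmeas N β 0
  -- step 1 : translation
  have h1 : ∫⁻ x in (ball x₀ δ)ᶜ, ((‖x - x₀‖₊ : ℝ≥0∞)) ^ (-β) =
      ∫⁻ x in (ball (0 : EN N) δ)ᶜ, ((‖x‖₊ : ℝ≥0∞)) ^ (-β) := by
    rw [← lintegral_indicator (measurableSet_ball.compl), ← lintegral_indicator (measurableSet_ball.compl)]
    rw [show (fun x => ((ball x₀ δ)ᶜ).indicator (fun x : EN N => ((‖x - x₀‖₊ : ℝ≥0∞)) ^ (-β)) x)
        = fun x => ((ball (0:EN N) δ)ᶜ).indicator (fun y : EN N => ((‖y‖₊ : ℝ≥0∞)) ^ (-β)) (x - x₀) from ?_]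
    · exact lintegral_sub_right_eq_self _ x₀
    · funext x
      by_cases hx : x ∈ (ball x₀ δ)ᶜ
      · have hx' : x - x₀ ∈ (ball (0:EN N) δ)ᶜ := by
          simpa [mem_ball, dist_eq_norm] using hx
        rw [Set.indicator_of_mem hx, Set.indicator_of_mem hx']
      · have hx' : x - x₀ ∉ (ball (0:EN N) δ)ᶜ := by
          simpa [mem_ball, dist_eq_norm] using hx
        rw [Set.indicator_of_notMem hx, Set.indicator_of_notMem hx']
  rw [h1]
  -- step 2 : scaling
  set g : EN N → ℝ≥0∞ := ((ball (0:EN N) δ)ᶜ).indicator (fun x => ((‖x‖₊ : ℝ≥0∞)) ^ (-β)) with hgdef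
  have hg : Measurable g := hmeas.indicator measurableSet_ball.compl
  have hn : Module.finrank ℝ (EN N) = N := by simp [finrank_euclideanSpace]
  set c : ℝ≥0∞ := ENNReal.ofReal |(δ ^ N)⁻¹| with hcdef
  have hc0 : c ≠ 0 := by
    simp only [hcdef, ne_eq, ENNReal.ofReal_eq_zero, not_le, abs_pos]
    positivity
  have hctop : c ≠ ⊤ := ENNReal.ofReal_ne_top
  have key : ∫⁻ y, g (δ • y) = c * ∫⁻ x, g x := by
    rw [← lintegral_map hg (measurable_const_smul δ), Measure.map_addHaar_smul volume hδ.ne',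
      lintegral_smul_measure, hn, smul_eq_mul]
  have hptwise : ∀ y : EN N, g (δ • y) =
      ENNReal.ofReal δ ^ (-β) * ((ball (0:EN N) 1)ᶜ).indicator (fun x => ((‖x‖₊ : ℝ≥0∞)) ^ (-β)) y := by
    intro y
    have hnorm : (‖δ • y‖₊ : ℝ≥0∞) = ENNReal.ofReal δ * (‖y‖₊ : ℝ≥0∞) := by
      rw [nnnorm_smul, ENNReal.coe_mul, ← enorm_eq_nnnorm δ, Real.enorm_eq_ofReal hδ.le]
    by_cases hy : y ∈ (ball (0:EN N) 1)ᶜ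
    · have hy' : δ • y ∈ (ball (0:EN N) δ)ᶜ := by
        simp only [mem_compl_iff, mem_ball, dist_zero_right, not_lt] at hy ⊢
        calc δ = δ * 1 := (mul_one δ).symm
        _ ≤ δ * ‖y‖ := by nlinarith
        _ = ‖δ • y‖ := by rw [norm_smul, Real.norm_eq_abs, abs_of_pos hδ]
      rw [hgdef]
      rw [Set.indicator_of_mem hy', Set.indicator_of_mem hy, hnorm,
        ENNReal.mul_rpow_of_ne_top ENNReal.ofReal_ne_top ENNReal.coe_ne_top]
    · have hy' : δ • y ∉ (ball (0:EN N) δ)ᶜ := by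
        simp only [mem_compl_iff, mem_ball, dist_zero_right, not_lt, not_le, not_not] at hy ⊢
        calc ‖δ • y‖ = δ * ‖y‖ := by rw [norm_smul, Real.norm_eq_abs, abs_of_pos hδ]
        _ < δ * 1 := by nlinarith
        _ = δ := mul_one δ
      rw [hgdef, Set.indicator_of_notMem hy', Set.indicator_of_notMem hy, mul_zero]
  have key2 : ∫⁻ y, g (δ • y) = ENNReal.ofReal δ ^ (-β) *
      ∫⁻ x in (ball (0:EN N) 1)ᶜ, ((‖x‖₊ : ℝ≥0∞)) ^ (-β) := by
    rw [← lintegral_indicator measurableSet_ball.compl, ← lintegral_const_mul _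
      (hmeas.indicator measurableSet_ball.compl)]
    exact lintegral_congr hptwise
  have hsolve : ∫⁻ x, g x = c⁻¹ * ∫⁻ y, g (δ • y) := by
    rw [key, ← mul_assoc, ENNReal.inv_mul_cancel hc0 hctop, one_mul]
  have hcinv : c⁻¹ = ENNReal.ofReal δ ^ (N : ℝ) := by
    rw [hcdef, abs_inv, abs_of_pos (by positivity : (0:ℝ) < δ ^ N),
      ENNReal.ofReal_inv_of_pos (by positivity), inv_inv, ENNReal.ofReal_pow hδ.le,
      ENNReal.rpow_natCast]
  have hfinal : c⁻¹ * ENNReal.ofReal δ ^ (-β) = ENNReal.ofReal (δ ^ ((N:ℝ) - β)) := by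
    rw [hcinv, ← ENNReal.rpow_add _ _ (by simpa using hδ) ENNReal.ofReal_ne_top,
      ← ENNReal.ofReal_rpow_of_pos hδ, sub_eq_add_neg]
  rw [← lintegral_indicator measurableSet_ball.compl, ← hgdef, hsolve, key2, ← mul_assoc, hfinal]

lemma finite_lemma (N : ℕ) (β : ℝ) (hβ : (N : ℝ) < β) :
    ∫⁻ x in (ball (0 : EN N) 1)ᶜ, ((‖x‖₊ : ℝ≥0∞)) ^ (-β) < ⊤ := by
  have hβ0 : 0 ≤ β := le_trans (Nat.cast_nonneg N) hβ.le
  have hn : Module.finrank ℝ (EN N) = N := by simp [finrank_euclideanSpace]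
  have hptw : ∀ x : EN N, x ∈ (ball (0 : EN N) 1)ᶜ →
      ((‖x‖₊ : ℝ≥0∞)) ^ (-β) ≤ ENNReal.ofReal (2 ^ β * (1 + ‖x‖) ^ (-β)) := by
    intro x hx
    have hr1 : (1 : ℝ) ≤ ‖x‖ := by
      simpa [mem_ball, dist_zero_right, not_lt] using hx
    have hr0 : (0 : ℝ) < ‖x‖ := by linarith
    set r := ‖x‖
    have hA : (0 : ℝ) < (1 + r) ^ β := Real.rpow_pos_of_pos (by linarith) β
    have h2 : (1 + r) ^ β ≤ 2 ^ β * r ^ β := by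
      rw [← Real.mul_rpow (by norm_num) hr0.le]
      exact Real.rpow_le_rpow (by linarith) (by linarith) hβ0
    have hreal : r ^ (-β) ≤ 2 ^ β * (1 + r) ^ (-β) := by
      have hrb : (0 : ℝ) < r ^ β := Real.rpow_pos_of_pos hr0 β
      rw [Real.rpow_neg hr0.le, Real.rpow_neg (by linarith : (0:ℝ) ≤ 1 + r)]
      rw [← div_eq_mul_inv, le_div_iff₀ hA, inv_mul_le_iff₀ hrb] at *
      nlinarith
    calc ((‖x‖₊ : ℝ≥0∞)) ^ (-β) = ENNReal.ofReal (r ^ (-β)) := by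
          rw [← enorm_eq_nnnorm, ← ofReal_norm, ENNReal.ofReal_rpow_of_pos hr0]
      _ ≤ ENNReal.ofReal (2 ^ β * (1 + r) ^ (-β)) := ENNReal.ofReal_le_ofReal hreal
  calc ∫⁻ x in (ball (0 : EN N) 1)ᶜ, ((‖x‖₊ : ℝ≥0∞)) ^ (-β)
      ≤ ∫⁻ x in (ball (0 : EN N) 1)ᶜ, ENNReal.ofReal (2 ^ β * (1 + ‖x‖) ^ (-β)) :=
        setLIntegral_mono (by fun_prop) hptw
    _ ≤ ∫⁻ x : EN N, ENNReal.ofReal (2 ^ β * (1 + ‖x‖) ^ (-β)) :=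
        setLIntegral_le_lintegral _ _
    _ = ENNReal.ofReal (2 ^ β) * ∫⁻ x : EN N, ENNReal.ofReal ((1 + ‖x‖) ^ (-β)) := by
        simp_rw [ENNReal.ofReal_mul (by positivity : (0:ℝ) ≤ 2 ^ β)]
        exact lintegral_const_mul _ (by fun_prop)
    _ < ⊤ := ENNReal.mul_lt_top ENNReal.ofReal_lt_top
        (by exact finite_integral_one_add_norm (by rw [hn]; exact hβ))

/-- `δ^N ∫_{ℝ^N ∖ B_δ(x₀)} |u|²/|x-x₀|^{N+2s} → 0` as `δ → 0⁺`. -/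
theorem statement4 (N : ℕ) (hN0 : 0 < N) (s : ℝ) (hs : s ∈ Set.Ioo (0 : ℝ) 1)
    (hNs : 2 * s < (N : ℝ)) (u : EN N → ℝ)
    (hu : MemLp u (ENNReal.ofReal (pstar N s)) volume) (x₀ : EN N) :
    Tendsto (fun δ : ℝ =>
        δ ^ (N : ℝ) * ∫ x in (ball x₀ δ)ᶜ, (u x) ^ 2 / ‖x - x₀‖ ^ ((N : ℝ) + 2 * s))
      (𝓝[>] 0) (𝓝 0) := by
  obtain ⟨hs0, hs1⟩ := hs
  have hN : (0:ℝ) < N := Nat.cast_pos.2 hN0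
  haveI : Nontrivial (EN N) := Module.nontrivial_of_finrank_pos
    (R := ℝ) (by simpa [finrank_euclideanSpace] using hN0)
  have hden : (0:ℝ) < (N:ℝ) - 2*s := by linarith
  set α : ℝ := (N:ℝ) + 2*s with hα
  have hα0 : 0 < α := by positivity
  set pst : ℝ := pstar N s with hpstdef
  have hpst : 0 < pst := by rw [hpstdef, pstar]; positivity
  set p : ℝ := (N:ℝ)/((N:ℝ)-2*s) with hpdef
  set q : ℝ := (N:ℝ)/(2*s) with hqdef
  have hp0 : 0 < p := by positivity
  have hq0 : 0 < q := by positivity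
  have hpq : p.HolderConjugate q := by
    rw [Real.holderConjugate_iff]
    constructor
    · rw [hpdef]; rw [lt_div_iff₀ hden]; linarith
    · rw [hpdef, hqdef]; field_simp; ring
  set β : ℝ := α * q with hβdef
  have hNβ : (N:ℝ) < β := by
    rw [hβdef, hα, hqdef, ← mul_div_assoc, lt_div_iff₀ (by linarith : (0:ℝ) < 2*s)]
    nlinarith [mul_pos hN hN]
  have h2p : 2 * p = pst := by rw [hpstdef, pstar, hpdef]; ring
  have hexp : ((N:ℝ) - β) * (1/q) = -(N:ℝ) := by
    rw [hβdef, hα, hqdef]; field_simp; ring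
  -- measurability
  have hum : AEMeasurable u volume := hu.1.aemeasurable
  set fE : EN N → ℝ≥0∞ := fun x => (‖u x‖₊ : ℝ≥0∞) ^ (2:ℝ) with hfEdef
  set gE : EN N → ℝ≥0∞ := fun x => (‖x - x₀‖₊ : ℝ≥0∞) ^ (-α) with hgEdef
  have hfE : AEMeasurable fE volume :=
    ENNReal.continuous_rpow_const.measurable.comp_aemeasurable hu.1.enorm
  have hgE : Measurable gE := gmeas N α x₀
  have hfEp : ∀ x, fE x ^ p = (‖u x‖₊ : ℝ≥0∞) ^ pst := fun x => by
    rw [hfEdef, ← ENNReal.rpow_mul, h2p]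
  have hgEq : ∀ x, gE x ^ q = (‖x - x₀‖₊ : ℝ≥0∞) ^ (-β) := fun x => by
    rw [hgEdef, ← ENNReal.rpow_mul, hβdef, neg_mul]
  -- finiteness of the Lp norm lintegral
  have hU : (∫⁻ x, (‖u x‖₊ : ℝ≥0∞) ^ pst) ≠ ⊤ := by
    have h1 := (eLpNorm_lt_top_iff_lintegral_rpow_enorm_lt_top
      (f := u) (μ := volume) (p := ENNReal.ofReal pst)
      (by simp [ENNReal.ofReal_eq_zero, not_le, hpst]) ENNReal.ofReal_ne_top).1 hu.2
    rw [ENNReal.toReal_ofReal hpst.le] at h1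
    exact h1.ne
  -- the density measure
  set ν : Measure (EN N) := volume.withDensity (fun x => (‖u x‖₊ : ℝ≥0∞) ^ pst) with hνdef
  have hνapp : ∀ {A : Set (EN N)}, MeasurableSet A →
      ν A = ∫⁻ x in A, (‖u x‖₊ : ℝ≥0∞) ^ pst := fun hA => withDensity_apply _ hA
  have hνfin : ∀ A : Set (EN N), ν A ≠ ⊤ := by
    intro A
    refine ne_top_of_le_ne_top ?_ (measure_mono (subset_univ A))
    rw [hνapp MeasurableSet.univ, Measure.restrict_univ]
    exact hU
  have hT : ∀ η : ℝ, 0 ≤ η → (∫⁻ x in ball x₀ η, (‖u x‖₊ : ℝ≥0∞) ^ pst) ≤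
      ν (cthickening η {x₀}) := by
    intro η hη
    rw [← hνapp measurableSet_ball, cthickening_singleton _ hη]
    exact measure_mono ball_subset_closedBall
  set Cβ : ℝ≥0∞ := ∫⁻ x in (ball (0 : EN N) 1)ᶜ, ((‖x‖₊ : ℝ≥0∞)) ^ (-β) with hCβdef
  have hCβ : Cβ ≠ ⊤ := (finite_lemma N β hNβ).ne
  set D : ℝ≥0∞ := Cβ ^ (1/q) with hDdef
  have hD : D ≠ ⊤ := ENNReal.rpow_ne_top_of_nonneg (by positivity) hCβ
  -- Hölder
  have hHolder : ∀ A : Set (EN N), (∫⁻ x in A, fE x * gE x) ≤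
      (∫⁻ x in A, (‖u x‖₊ : ℝ≥0∞) ^ pst) ^ (1/p) *
      (∫⁻ x in A, (‖x - x₀‖₊ : ℝ≥0∞) ^ (-β)) ^ (1/q) := by
    intro A
    have h := ENNReal.lintegral_mul_le_Lp_mul_Lq (volume.restrict A) hpq
      hfE.restrict hgE.aemeasurable.restrict
    simpa only [Pi.mul_apply, hfEp, hgEq] using h
  -- representation of the real integral via the lintegral
  have hrepr : ∀ δ : ℝ, 0 < δ →
      δ ^ (N : ℝ) * ∫ x in (ball x₀ δ)ᶜ, (u x) ^ 2 / ‖x - x₀‖ ^ α =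
      (ENNReal.ofReal (δ ^ (N : ℝ)) * ∫⁻ x in (ball x₀ δ)ᶜ, fE x * gE x).toReal := by
    intro δ hδ
    have hmble : AEStronglyMeasurable (fun x => u x ^ 2 / ‖x - x₀‖ ^ α)
        (volume.restrict (ball x₀ δ)ᶜ) := by
      refine AEMeasurable.aestronglyMeasurable ?_
      have hden' : Measurable (fun x : EN N => ‖x - x₀‖ ^ α) := by fun_prop
      exact ((hum.pow_const 2).div hden'.aemeasurable).restrict
    have h1 : ∫ x in (ball x₀ δ)ᶜ, u x ^ 2 / ‖x - x₀‖ ^ α =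
        (∫⁻ x in (ball x₀ δ)ᶜ, ENNReal.ofReal (u x ^ 2 / ‖x - x₀‖ ^ α)).toReal := by
      refine integral_eq_lintegral_of_nonneg_ae (ae_of_all _ fun x => ?_) hmble
      positivity
    have h2 : ∫⁻ x in (ball x₀ δ)ᶜ, ENNReal.ofReal (u x ^ 2 / ‖x - x₀‖ ^ α) =
        ∫⁻ x in (ball x₀ δ)ᶜ, fE x * gE x := by
      refine setLIntegral_congr_fun measurableSet_ball.compl (fun x hx => ?_)
      have hxpos : 0 < ‖x - x₀‖ := by
        have : δ ≤ dist x x₀ := not_lt.1 (by simpa [mem_ball] using hx)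
        rw [dist_eq_norm] at this; linarith
      have hu2 : ENNReal.ofReal (u x ^ 2) = (‖u x‖₊ : ℝ≥0∞) ^ (2:ℝ) := by
        rw [show u x ^ 2 = ‖u x‖ ^ 2 by rw [Real.norm_eq_abs, sq_abs],
          ENNReal.ofReal_pow (norm_nonneg _), ofReal_norm, enorm_eq_nnnorm,
          show ((‖u x‖₊ : ℝ≥0∞)) ^ (2:ℕ) = (‖u x‖₊ : ℝ≥0∞) ^ ((2:ℕ):ℝ) from
            (ENNReal.rpow_natCast _ 2).symm]
        norm_num
      simp only [hfEdef, hgEdef]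
      rw [ENNReal.ofReal_div_of_pos (Real.rpow_pos_of_pos hxpos α), div_eq_mul_inv, hu2,
        ← ENNReal.ofReal_rpow_of_pos hxpos, ofReal_norm, enorm_eq_nnnorm,
        ENNReal.rpow_neg]
    rw [h1, h2, ENNReal.toReal_mul, ENNReal.toReal_ofReal (Real.rpow_nonneg hδ.le _)]
  -- the ENNReal-valued tendsto
  have hF : Tendsto (fun δ : ℝ =>
      ENNReal.ofReal (δ ^ (N : ℝ)) * ∫⁻ x in (ball x₀ δ)ᶜ, fE x * gE x) (𝓝[>] 0) (𝓝 0) := by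
    rw [ENNReal.tendsto_nhds_zero]
    intro ε hε
    -- choose η
    have hW : Tendsto (fun η : ℝ => (ν (cthickening η {x₀})) ^ (1/p) * D) (𝓝 0) (𝓝 0) := by
      have t0 : Tendsto (fun η : ℝ => ν (cthickening η {x₀})) (𝓝 0) (𝓝 (ν {x₀})) :=
        tendsto_measure_cthickening_of_isClosed ⟨1, one_pos, hνfin _⟩ isClosed_singleton
      have hν0 : ν {x₀} = 0 :=
        withDensity_absolutelyContinuous volume _ (measure_singleton x₀)
      rw [hν0] at t0
      have t1 : Tendsto (fun η : ℝ => (ν (cthickening η {x₀})) ^ (1/p)) (𝓝 0) (𝓝 0) := by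
        have h0 : ((0:ℝ≥0∞)) ^ (1/p) = 0 := ENNReal.zero_rpow_of_pos (by positivity)
        have := (ENNReal.continuous_rpow_const (y := 1/p)).tendsto (0:ℝ≥0∞)
        rw [h0] at this
        exact this.comp t0
      have := ENNReal.Tendsto.mul_const t1 (Or.inr hD)
      simpa using this
    have hWev := (ENNReal.tendsto_nhds_zero.1 hW) (ε/2) (ENNReal.half_pos hε.ne')
    obtain ⟨η, hη1, hη2⟩ :=
      ((hWev.filter_mono (nhdsWithin_le_nhds (s := Set.Ioi (0:ℝ)))).and
        eventually_mem_nhdsWithin).exists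
    have hηpos : (0:ℝ) < η := hη2
    -- the constant K
    set K : ℝ≥0∞ := (∫⁻ x, (‖u x‖₊ : ℝ≥0∞) ^ pst) ^ (1/p) *
      (ENNReal.ofReal (η ^ ((N:ℝ) - β))) ^ (1/q) * D with hKdef
    have hK : K ≠ ⊤ := by
      refine ENNReal.mul_ne_top (ENNReal.mul_ne_top ?_ ?_) hD
      · exact ENNReal.rpow_ne_top_of_nonneg (by positivity) hU
      · exact ENNReal.rpow_ne_top_of_nonneg (by positivity) ENNReal.ofReal_ne_top
    have tδ : Tendsto (fun δ : ℝ => ENNReal.ofReal (δ ^ (N:ℝ)) * K) (𝓝[>] 0) (𝓝 0) := by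
      have h1 : Tendsto (fun δ : ℝ => δ ^ (N:ℝ)) (𝓝[>] 0) (𝓝 0) := by
        have hcont : Tendsto (fun δ : ℝ => δ ^ N) (𝓝 (0:ℝ)) (𝓝 0) := by
          simpa [zero_pow hN0.ne'] using (continuous_pow N).tendsto (0:ℝ)
        exact ((hcont.mono_left nhdsWithin_le_nhds).congr
          (fun δ => (Real.rpow_natCast δ N).symm))
      have h2 : Tendsto (fun δ : ℝ => ENNReal.ofReal (δ ^ (N:ℝ))) (𝓝[>] 0) (𝓝 0) := by
        simpa using (ENNReal.tendsto_ofReal h1)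
      simpa using ENNReal.Tendsto.mul_const h2 (Or.inr hK)
    have hδev := (ENNReal.tendsto_nhds_zero.1 tδ) (ε/2) (ENNReal.half_pos hε.ne')
    filter_upwards [hδev, Ioc_mem_nhdsGT hηpos] with δ hδK hδIoc
    obtain ⟨hδ0, hδη⟩ := hδIoc
    -- split the integral
    have hsub : (ball x₀ δ)ᶜ ⊆ ((ball x₀ δ)ᶜ ∩ ball x₀ η) ∪ (ball x₀ η)ᶜ := by
      intro x hx
      by_cases h : x ∈ ball x₀ η
      · exact Or.inl ⟨hx, h⟩
      · exact Or.inr h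
    have hsplit : (∫⁻ x in (ball x₀ δ)ᶜ, fE x * gE x) ≤
        (∫⁻ x in (ball x₀ δ)ᶜ ∩ ball x₀ η, fE x * gE x) +
        (∫⁻ x in (ball x₀ η)ᶜ, fE x * gE x) :=
      (lintegral_mono_set hsub).trans (lintegral_union_le _ _ _)
    -- power bookkeeping
    have hpow : ∀ r : ℝ, 0 < r → (ENNReal.ofReal (r ^ ((N:ℝ) - β))) ^ (1/q) =
        (ENNReal.ofReal r) ^ (-(N:ℝ)) := by
      intro r hr
      rw [← ENNReal.ofReal_rpow_of_pos hr, ← ENNReal.rpow_mul, hexp]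
    have hone : ENNReal.ofReal (δ ^ (N:ℝ)) * (ENNReal.ofReal (δ ^ ((N:ℝ) - β))) ^ (1/q) = 1 := by
      rw [hpow δ hδ0, ← ENNReal.ofReal_rpow_of_pos hδ0,
        ← ENNReal.rpow_add _ _ (by simpa using hδ0) ENNReal.ofReal_ne_top, add_neg_cancel,
        ENNReal.rpow_zero]
    -- bound term 1
    have hterm1 : ENNReal.ofReal (δ ^ (N:ℝ)) *
        (∫⁻ x in (ball x₀ δ)ᶜ ∩ ball x₀ η, fE x * gE x) ≤ ε/2 := by
      have hb1 : (∫⁻ x in (ball x₀ δ)ᶜ ∩ ball x₀ η, (‖u x‖₊ : ℝ≥0∞) ^ pst) ≤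
          ν (cthickening η {x₀}) :=
        (lintegral_mono_set inter_subset_right).trans (hT η hηpos.le)
      have hb2 : (∫⁻ x in (ball x₀ δ)ᶜ ∩ ball x₀ η, (‖x - x₀‖₊ : ℝ≥0∞) ^ (-β)) ≤
          ENNReal.ofReal (δ ^ ((N:ℝ) - β)) * Cβ := by
        rw [← scale_lemma N β x₀ hδ0]
        exact lintegral_mono_set inter_subset_left
      calc ENNReal.ofReal (δ ^ (N:ℝ)) * (∫⁻ x in (ball x₀ δ)ᶜ ∩ ball x₀ η, fE x * gE x)
          ≤ ENNReal.ofReal (δ ^ (N:ℝ)) * ((ν (cthickening η {x₀})) ^ (1/p) *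
            (ENNReal.ofReal (δ ^ ((N:ℝ) - β)) * Cβ) ^ (1/q)) := by
            refine mul_le_mul_right ((hHolder _).trans ?_) _
            exact mul_le_mul' (ENNReal.rpow_le_rpow hb1 (by positivity))
              (ENNReal.rpow_le_rpow hb2 (by positivity))
        _ = (ν (cthickening η {x₀})) ^ (1/p) * D *
            (ENNReal.ofReal (δ ^ (N:ℝ)) * (ENNReal.ofReal (δ ^ ((N:ℝ) - β))) ^ (1/q)) := by
            rw [ENNReal.mul_rpow_of_nonneg _ _ (by positivity : (0:ℝ) ≤ 1/q), hDdef]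
            ring
        _ = (ν (cthickening η {x₀})) ^ (1/p) * D := by rw [hone, mul_one]
        _ ≤ ε/2 := hη1
    -- bound term 2
    have hterm2 : ENNReal.ofReal (δ ^ (N:ℝ)) *
        (∫⁻ x in (ball x₀ η)ᶜ, fE x * gE x) ≤ ε/2 := by
      have hb1 : (∫⁻ x in (ball x₀ η)ᶜ, (‖u x‖₊ : ℝ≥0∞) ^ pst) ≤
          ∫⁻ x, (‖u x‖₊ : ℝ≥0∞) ^ pst := setLIntegral_le_lintegral _ _
      have hb2 : (∫⁻ x in (ball x₀ η)ᶜ, (‖x - x₀‖₊ : ℝ≥0∞) ^ (-β)) =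
          ENNReal.ofReal (η ^ ((N:ℝ) - β)) * Cβ := scale_lemma N β x₀ hηpos
      have hL2 : (∫⁻ x in (ball x₀ η)ᶜ, fE x * gE x) ≤ K := by
        refine (hHolder _).trans ?_
        rw [hKdef, hb2, ENNReal.mul_rpow_of_nonneg _ _ (by positivity : (0:ℝ) ≤ 1/q), hDdef,
          mul_assoc]
        exact mul_le_mul' (ENNReal.rpow_le_rpow hb1 (by positivity)) le_rfl
      exact (mul_le_mul_right hL2 _).trans hδK
    calc ENNReal.ofReal (δ ^ (N:ℝ)) * (∫⁻ x in (ball x₀ δ)ᶜ, fE x * gE x)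
        ≤ ENNReal.ofReal (δ ^ (N:ℝ)) * ((∫⁻ x in (ball x₀ δ)ᶜ ∩ ball x₀ η, fE x * gE x) +
          (∫⁻ x in (ball x₀ η)ᶜ, fE x * gE x)) := mul_le_mul_right hsplit _
      _ = ENNReal.ofReal (δ ^ (N:ℝ)) * (∫⁻ x in (ball x₀ δ)ᶜ ∩ ball x₀ η, fE x * gE x) +
          ENNReal.ofReal (δ ^ (N:ℝ)) * (∫⁻ x in (ball x₀ η)ᶜ, fE x * gE x) := mul_add _ _ _
      _ ≤ ε/2 + ε/2 := add_le_add hterm1 hterm2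
      _ = ε := ENNReal.add_halves ε
  -- conclude
  have htoReal := (ENNReal.tendsto_toReal (by simp : (0:ℝ≥0∞) ≠ ⊤)).comp hF
  rw [ENNReal.toReal_zero] at htoReal
  refine htoReal.congr' ?_
  filter_upwards [eventually_mem_nhdsWithin] with δ hδ
  exact (hrepr δ hδ).symm
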